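/- Let s, f, F̂, F ∈ ℝ with |f| ≤ F, and ρ₁, ρ₂, m, μ > 0. Define u = -(F̂ + ρ₁/√2)·sign(s) - ρ₂·s. Then (s/m)·(f + u) + (1/μ)·(F̂ - F)·((μ/m)·|s|) ≤ (1/m)·(-ρ₁/√2·|s| - ρ₂·s²) ≤ 0. -/

import Mathlib

open Real

theorem stmt_3 (s f Fhat F ρ₁ ρ₂ m μ : ℝ) (hf : |f| ≤ F)
    (hρ₁ : 0 < ρ₁) (hρ₂ : 0 < ρ₂) (hm : 0 < m) (hμ : 0 < μ) :
    (s / m) * (f + (-(Fhat + ρ₁ / Real.sqrt 2) * Real.sign s - ρ₂ * s)) +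
        (1 / μ) * (Fhat - F) * ((μ / m) * |s|) ≤
      (1 / m) * (-(ρ₁ / Real.sqrt 2) * |s| - ρ₂ * s ^ 2) ∧
    (1 / m) * (-(ρ₁ / Real.sqrt 2) * |s| - ρ₂ * s ^ 2) ≤ 0 := by
  have hsqrt : (0:ℝ) < Real.sqrt 2 := by positivity
  have hsgn : s * Real.sign s = |s| := by
    rcases lt_trichotomy s 0 with h | h | h
    · rw [Real.sign_of_neg h, abs_of_neg h]; ring
    · simp [h]
    · rw [Real.sign_of_pos h, abs_of_pos h]; ring
  have hsf : s * f ≤ |s| * F := by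
    calc s * f ≤ |s * f| := le_abs_self _
    _ = |s| * |f| := abs_mul s f
    _ ≤ |s| * F := mul_le_mul_of_nonneg_left hf (abs_nonneg s)
  constructor
  · have key : s * (f + (-(Fhat + ρ₁ / Real.sqrt 2) * Real.sign s - ρ₂ * s)) +
        (Fhat - F) * |s| ≤ -(ρ₁ / Real.sqrt 2) * |s| - ρ₂ * s ^ 2 := by
      have h1 : s * (f + (-(Fhat + ρ₁ / Real.sqrt 2) * Real.sign s - ρ₂ * s)) =
          s * f - (Fhat + ρ₁ / Real.sqrt 2) * |s| - ρ₂ * s ^ 2 := by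
        rw [← hsgn]; ring
      rw [h1]
      nlinarith [hsf]
    have heq : s / m * (f + (-(Fhat + ρ₁ / Real.sqrt 2) * Real.sign s - ρ₂ * s)) +
        1 / μ * (Fhat - F) * (μ / m * |s|) =
        (1 / m) * (s * (f + (-(Fhat + ρ₁ / Real.sqrt 2) * Real.sign s - ρ₂ * s)) +
        (Fhat - F) * |s|) := by
      field_simp
    rw [heq]
    exact mul_le_mul_of_nonneg_left key (by positivity)
  · have h1 : 0 ≤ (ρ₁ / Real.sqrt 2) * |s| + ρ₂ * s ^ 2 := by positivity
    have : -(ρ₁ / Real.sqrt 2) * |s| - ρ₂ * s ^ 2 ≤ 0 := by linarith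
    have h2 : 0 < 1 / m := by positivity
    nlinarith
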